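/- Let N be a positive integer, let Σ₀ ∈ ℂ^{N×N} be Hermitian positive definite, let S ∈ ℂ^{N×N} be Hermitian positive semidefinite, and let a ∈ ℂ^N with a ≠ 0. For γ ≥ 0 the matrix Σ₀ + γ·(a aᴴ) is Hermitian positive definite; define ℓᵢ(γ) := Re(trace((Σ₀ + γ·(a aᴴ))⁻¹ * S)) + Real.log (Re(det(Σ₀ + γ·(a aᴴ)))). Let q := Re(aᴴ Σ₀⁻¹ (S − Σ₀) Σ₀⁻¹ a) / (Re(aᴴ Σ₀⁻¹ a))² and γ⋆ := max(q, 0). Then for every γ ≥ 0, ℓᵢ(γ⋆) ≤ ℓᵢ(γ), with strict inequality whenever γ ≠ γ⋆. -/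

import Mathlib

open Matrix
open scoped ComplexOrder

private lemma trace_vmv_mul {N : ℕ} (u v : Fin N → ℂ) (B : Matrix (Fin N) (Fin N) ℂ) :
    Matrix.trace (vecMulVec u v * B) = v ⬝ᵥ (B *ᵥ u) := by
  simp only [Matrix.trace, Matrix.diag, Matrix.mul_apply, vecMulVec_apply, dotProduct,
    Matrix.mulVec, Finset.mul_sum, Finset.sum_mul]
  rw [Finset.sum_comm]
  exact Finset.sum_congr rfl fun j _ => Finset.sum_congr rfl fun i _ => by ring

private lemma vmv_mul_mul {N : ℕ} (u v x y : Fin N → ℂ) (B : Matrix (Fin N) (Fin N) ℂ) :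
    vecMulVec u v * B * vecMulVec x y = (v ⬝ᵥ (B *ᵥ x)) • vecMulVec u y := by
  ext i j
  simp only [Matrix.mul_apply, vecMulVec_apply, Matrix.smul_apply, smul_eq_mul, dotProduct,
    Matrix.mulVec, Finset.mul_sum, Finset.sum_mul]
  rw [Finset.sum_comm]
  exact Finset.sum_congr rfl fun l _ => Finset.sum_congr rfl fun k _ => by ring

private lemma smul_vmv {N : ℕ} (z : ℂ) (u v : Fin N → ℂ) :
    vecMulVec (z • u) v = z • vecMulVec u v := by
  ext i j
  simp [vecMulVec_apply, mul_assoc]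

private lemma core_ineq (k t s : ℝ) (hk : 0 ≤ k) (ht : 1 ≤ t) (hs : s = max k 1)
    (hts : t ≠ s) : Real.log s + k / s < Real.log t + k / t := by
  have hs1 : 1 ≤ s := hs ▸ le_max_right _ _
  have hsp : 0 < s := by linarith
  have htp : 0 < t := by linarith
  have hlog : Real.log (s / t) < s / t - 1 := by
    refine Real.log_lt_sub_one_of_pos (by positivity) ?_
    intro h
    apply hts
    field_simp at h
    linarith
  rw [Real.log_div hsp.ne' htp.ne'] at hlog
  have hkey : 0 ≤ (t - s) * (s - k) / (s * t) := by
    rcases le_total k 1 with h | h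
    · have hs' : s = 1 := by simp [hs, max_eq_right h]
      subst hs'
      have h1 : 0 ≤ (t - 1) * (1 - k) := mul_nonneg (by linarith) (by linarith)
      positivity
    · have hs' : s = k := by simp [hs, max_eq_left h]
      simp [hs']
  have heq : 1 - s / t + (k / t - k / s) = (t - s) * (s - k) / (s * t) := by
    field_simp
    ring
  linarith

theorem stmt_13 (N : ℕ) (hN : 0 < N)
    (Sig0 : Matrix (Fin N) (Fin N) ℂ) (hSig0 : Sig0.PosDef)
    (S : Matrix (Fin N) (Fin N) ℂ) (hS : S.PosSemidef)
    (a : Fin N → ℂ) (ha : a ≠ 0)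
    (ℓ : ℝ → ℝ)
    (hℓ : ∀ γ : ℝ, 0 ≤ γ → ℓ γ = (Matrix.trace ((Sig0 + (γ : ℂ) • vecMulVec a (star a))⁻¹ * S)).re
        + Real.log ((Sig0 + (γ : ℂ) • vecMulVec a (star a)).det.re))
    (q γstar : ℝ)
    (hq : q = (star a ⬝ᵥ ((Sig0⁻¹ * (S - Sig0) * Sig0⁻¹) *ᵥ a)).re
        / ((star a ⬝ᵥ (Sig0⁻¹ *ᵥ a)).re) ^ 2)
    (hγstar : γstar = max q 0) :
    ∀ γ : ℝ, 0 ≤ γ → (ℓ γstar ≤ ℓ γ ∧ (γ ≠ γstar → ℓ γstar < ℓ γ)) := by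
  have hA : Sig0.IsHermitian := hSig0.isHermitian
  have hdet : IsUnit Sig0.det := hSig0.det_pos.ne'.isUnit
  have hAinv : Sig0⁻¹.IsHermitian := hA.inv
  -- the quantity c = aᴴ Σ₀⁻¹ a
  set c : ℂ := star a ⬝ᵥ (Sig0⁻¹ *ᵥ a) with hc_def
  have hc_pos : 0 < c := hSig0.inv.dotProduct_mulVec_pos ha
  set cr : ℝ := c.re with hcr_def
  have hcr_pos : 0 < cr := (Complex.lt_def.mp hc_pos).1
  have hc_eq : c = (cr : ℂ) := Complex.ext rfl (by
    simpa using ((Complex.lt_def.mp hc_pos).2).symm)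
  -- the quantity r = aᴴ Σ₀⁻¹ S Σ₀⁻¹ a
  set r : ℂ := star a ⬝ᵥ ((Sig0⁻¹ * S * Sig0⁻¹) *ᵥ a) with hr_def
  have hr_nonneg : 0 ≤ r := by
    have h1 : (Sig0⁻¹ * S * Sig0⁻¹).PosSemidef := by
      have := hS.mul_mul_conjTranspose_same Sig0⁻¹
      rwa [hAinv.eq] at this
    exact h1.dotProduct_mulVec_nonneg a
  set rr : ℝ := r.re with hrr_def
  have hrr_nonneg : 0 ≤ rr := (Complex.le_def.mp hr_nonneg).1
  have hr_eq : r = (rr : ℂ) := Complex.ext rfl (by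
    simpa using ((Complex.le_def.mp hr_nonneg).2).symm)
  -- determinant is a positive real
  set dA : ℝ := Sig0.det.re with hdA_def
  have hdA_pos : 0 < dA := (Complex.lt_def.mp hSig0.det_pos).1
  have hdet_eq : Sig0.det = (dA : ℂ) := Complex.ext rfl (by
    simpa using ((Complex.lt_def.mp hSig0.det_pos).2).symm)
  -- value of q
  have hq' : q = (rr - cr) / cr ^ 2 := by
    have hmat : Sig0⁻¹ * (S - Sig0) * Sig0⁻¹ = Sig0⁻¹ * S * Sig0⁻¹ - Sig0⁻¹ := by
      rw [Matrix.mul_sub, Matrix.sub_mul, Matrix.mul_assoc Sig0⁻¹ Sig0 Sig0⁻¹,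
        Matrix.mul_nonsing_inv _ hdet, Matrix.mul_one]
    rw [hq, hmat, Matrix.sub_mulVec, dotProduct_sub, Complex.sub_re]
  set kk : ℝ := rr / cr with hkk_def
  have hkk_nonneg : 0 ≤ kk := div_nonneg hrr_nonneg hcr_pos.le
  -- closed form of ℓ on [0, ∞)
  have key : ∀ γ : ℝ, 0 ≤ γ →
      ℓ γ = ((Matrix.trace (Sig0⁻¹ * S)).re - kk + Real.log dA)
        + (Real.log (1 + γ * cr) + kk / (1 + γ * cr)) := by
    intro γ hγ
    have hposd : 0 < 1 + γ * cr := by nlinarith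
    set W : Matrix (Fin N) (Fin N) ℂ := vecMulVec a (star a) with hW_def
    set k : ℝ := γ / (1 + γ * cr) with hk_def
    have hk1 : k * (1 + γ * cr) = γ := div_mul_cancel₀ γ hposd.ne'
    have hWAW : W * Sig0⁻¹ * W = c • W := vmv_mul_mul a (star a) a (star a) Sig0⁻¹
    set B : Matrix (Fin N) (Fin N) ℂ := Sig0⁻¹ - (k : ℂ) • (Sig0⁻¹ * W * Sig0⁻¹) with hB_def
    have e1 : Sig0 * (Sig0⁻¹ * W * Sig0⁻¹) = W * Sig0⁻¹ := by
      rw [Matrix.mul_assoc Sig0⁻¹ W Sig0⁻¹, ← Matrix.mul_assoc,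
        Matrix.mul_nonsing_inv _ hdet, Matrix.one_mul]
    have e2 : W * (Sig0⁻¹ * W * Sig0⁻¹) = c • (W * Sig0⁻¹) := by
      rw [Matrix.mul_assoc Sig0⁻¹ W Sig0⁻¹, ← Matrix.mul_assoc, ← Matrix.mul_assoc, hWAW,
        Matrix.smul_mul]
    have hcoefR : γ - k - γ * (k * cr) = 0 := by
      have h2 : k + k * (γ * cr) = γ := by linarith [hk1, (by ring : k * (1 + γ * cr) = k + k * (γ * cr))]
      nlinarith [h2]
    have hcoef : (γ : ℂ) - (k : ℂ) - (γ : ℂ) * ((k : ℂ) * (cr : ℂ)) = 0 := by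
      have := congrArg (fun x : ℝ => (x : ℂ)) hcoefR
      push_cast at this
      linear_combination this
    have expand : (Sig0 + (γ : ℂ) • W) * B
        = 1 + ((γ : ℂ) - (k : ℂ) - (γ : ℂ) * ((k : ℂ) * (cr : ℂ))) • (W * Sig0⁻¹) := by
      rw [hB_def]
      simp only [Matrix.add_mul, Matrix.mul_sub, smul_mul_assoc, mul_smul_comm,
        Matrix.mul_nonsing_inv _ hdet, e1, e2, hc_eq, smul_smul]
      module
    have hMB : (Sig0 + (γ : ℂ) • W) * B = 1 := by
      rw [expand, hcoef, zero_smul, add_zero]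
    have hMinv : (Sig0 + (γ : ℂ) • W)⁻¹ = B := Matrix.inv_eq_right_inv hMB
    -- determinant
    have hdetM : (Sig0 + (γ : ℂ) • W).det = (dA : ℂ) * (1 + (γ : ℂ) * (cr : ℂ)) := by
      have hWrow : (γ : ℂ) • W = replicateCol Unit ((γ : ℂ) • a) * replicateRow Unit (star a) := by
        rw [← vecMulVec_eq, smul_vmv]
      have hsmall : (1 + replicateRow Unit (star a) * Sig0⁻¹ * replicateCol Unit ((γ : ℂ) • a)).det
          = 1 + (γ : ℂ) * (cr : ℂ) := by
        rw [Matrix.det_unique, Matrix.add_apply, Matrix.one_apply_eq, Matrix.mul_assoc,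
          ← Matrix.replicateCol_mulVec, Matrix.replicateRow_mul_replicateCol_apply, Matrix.mulVec_smul, dotProduct_smul,
          ← hc_def, hc_eq, smul_eq_mul]
      rw [hWrow, Matrix.det_add_replicateCol_mul_replicateRow hdet, hsmall, hdet_eq]
    -- trace
    have htr2 : Matrix.trace (Sig0⁻¹ * W * Sig0⁻¹ * S) = r := by
      have assoc1 : Sig0⁻¹ * W * Sig0⁻¹ * S = Sig0⁻¹ * (W * (Sig0⁻¹ * S)) := by
        simp only [Matrix.mul_assoc]
      rw [assoc1, Matrix.trace_mul_comm, Matrix.mul_assoc, trace_vmv_mul]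
    have htr : Matrix.trace ((Sig0 + (γ : ℂ) • W)⁻¹ * S)
        = Matrix.trace (Sig0⁻¹ * S) - (k : ℂ) * (rr : ℂ) := by
      rw [hMinv, hB_def, Matrix.sub_mul, Matrix.trace_sub, smul_mul_assoc,
        Matrix.trace_smul, htr2, hr_eq, smul_eq_mul]
    -- put it together
    have hdet_re : (Sig0 + (γ : ℂ) • W).det.re = dA * (1 + γ * cr) := by
      rw [hdetM]
      have : (dA : ℂ) * (1 + (γ : ℂ) * (cr : ℂ)) = ((dA * (1 + γ * cr) : ℝ) : ℂ) := by
        push_cast; ring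
      rw [this, Complex.ofReal_re]
    have htr_re : (Matrix.trace ((Sig0 + (γ : ℂ) • W)⁻¹ * S)).re
        = (Matrix.trace (Sig0⁻¹ * S)).re - k * rr := by
      rw [htr, Complex.sub_re]
      norm_num [Complex.mul_re]
    have harith : k * rr = kk - kk / (1 + γ * cr) := by
      rw [hk_def, hkk_def]
      field_simp
      ring
    rw [hℓ γ hγ, htr_re, hdet_re, Real.log_mul hdA_pos.ne' hposd.ne']
    rw [harith]
    ring
  -- the final optimization argument
  intro γ hγ
  have hγs : 0 ≤ γstar := by rw [hγstar]; exact le_max_right _ _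
  have hs_eq : 1 + γstar * cr = max kk 1 := by
    rcases le_or_gt q 0 with h | h
    · have h0 : γstar = 0 := by rw [hγstar, max_eq_right h]
      have hrc : rr ≤ cr := by
        rw [hq'] at h
        rcases div_nonpos_iff.mp h with ⟨h1, h2⟩ | ⟨h1, h2⟩
        · nlinarith [pow_pos hcr_pos 2]
        · linarith
      have hk1 : kk ≤ 1 := by rw [hkk_def, div_le_one hcr_pos]; exact hrc
      rw [h0, max_eq_right hk1]; ring
    · have h0 : γstar = q := by rw [hγstar, max_eq_left h.le]
      have hrc : cr ≤ rr := by
        rw [hq'] at h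
        rcases div_pos_iff.mp h with ⟨h1, h2⟩ | ⟨h1, h2⟩
        · linarith
        · nlinarith [pow_pos hcr_pos 2]
      have hk1 : 1 ≤ kk := by rw [hkk_def, le_div_iff₀ hcr_pos]; linarith
      rw [h0, max_eq_left hk1, hq', hkk_def]
      field_simp
      ring
  have hmain : γ ≠ γstar → ℓ γstar < ℓ γ := by
    intro hne
    rw [key γ hγ, key γstar hγs]
    have hts : (1 + γ * cr) ≠ (1 + γstar * cr) := by
      intro h
      apply hne
      have : γ * cr = γstar * cr := by linarith
      exact mul_right_cancel₀ hcr_pos.ne' this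
    have := core_ineq kk (1 + γ * cr) (1 + γstar * cr) hkk_nonneg
      (by nlinarith) hs_eq hts
    linarith
  refine ⟨?_, hmain⟩
  rcases eq_or_ne γ γstar with h | h
  · rw [h]
  · exact (hmain h).le
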